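/- Let α ≥ 4 and let g : ℝ² → [0,1] be a measurable function satisfying sup_{x ∈ ℝ²} g(x)/|x|^{−α} < ∞, where |·| denotes the 1-norm on ℝ². Let B = [a₁,b₁] × [a₂,b₂] ⊂ ℝ² be a bounded box (a₁ < b₁, a₂ < b₂). Then ∫_B ∫_{ℝ² \ B} g(x − y) dx dy < ∞. -/
import Mathlib


open MeasureTheory ENNReal Set

lemma my_finite_total
    (α : ℝ) (hα : 4 ≤ α)
    (g : ℝ × ℝ → ℝ) (hgm : Measurable g)
    (hg0 : ∀ x, 0 ≤ g x) (hg1 : ∀ x, g x ≤ 1)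
    (hbound : ∃ M : ℝ, ∀ x : ℝ × ℝ, x ≠ 0 → g x ≤ M * (|x.1| + |x.2|) ^ (-α)) :
    ∫⁻ x : ℝ × ℝ, ENNReal.ofReal (g x) < ⊤ := by
  obtain ⟨M, hM⟩ := hbound
  set K : ℝ := max M 0 * 2 ^ α with hK
  have hKnn : 0 ≤ K := by positivity
  have hpt : ∀ x : ℝ × ℝ, ENNReal.ofReal (g x) ≤
      (Metric.closedBall (0 : ℝ × ℝ) 1).indicator (fun _ => 1) x
        + ENNReal.ofReal K * ENNReal.ofReal ((1 + ‖x‖) ^ (-α)) := by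
    intro x
    by_cases hx : x ∈ Metric.closedBall (0 : ℝ × ℝ) 1
    · refine le_trans ?_ (le_add_of_nonneg_right bot_le)
      rw [indicator_of_mem hx]
      exact ENNReal.ofReal_le_one.2 (hg1 x)
    · have hx1 : 1 < ‖x‖ := by simpa [Metric.mem_closedBall] using hx
      have hx0 : x ≠ 0 := by
        intro h; rw [h] at hx1; simp at hx1; linarith
      have hs : (1 + ‖x‖) / 2 ≤ |x.1| + |x.2| := by
        have h1 : ‖x‖ ≤ |x.1| + |x.2| := by
          rw [Prod.norm_def]
          simp only [Real.norm_eq_abs]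
          exact max_le (le_add_of_nonneg_right (abs_nonneg _))
            (le_add_of_nonneg_left (abs_nonneg _))
        linarith
      have hspos : 0 < (1 + ‖x‖) / 2 := by linarith
      have hαpos : 0 < α := by linarith
      have h2 : g x ≤ K * (1 + ‖x‖) ^ (-α) := by
        calc g x ≤ M * (|x.1| + |x.2|) ^ (-α) := hM x hx0
          _ ≤ max M 0 * (|x.1| + |x.2|) ^ (-α) :=
              mul_le_mul_of_nonneg_right (le_max_left _ _)
                (Real.rpow_nonneg (by positivity) _)
          _ ≤ max M 0 * ((1 + ‖x‖) / 2) ^ (-α) :=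
              mul_le_mul_of_nonneg_left
                (Real.rpow_le_rpow_of_nonpos hspos hs (by linarith)) (le_max_right _ _)
          _ = K * (1 + ‖x‖) ^ (-α) := by
              rw [Real.div_rpow (by linarith) (by norm_num),
                Real.rpow_neg (by norm_num : (0:ℝ) ≤ 2), hK, div_eq_mul_inv, inv_inv]
              ring
      refine le_trans ?_ (le_add_of_nonneg_left bot_le)
      calc ENNReal.ofReal (g x) ≤ ENNReal.ofReal (K * (1 + ‖x‖) ^ (-α)) :=
            ENNReal.ofReal_le_ofReal h2
        _ = ENNReal.ofReal K * ENNReal.ofReal ((1 + ‖x‖) ^ (-α)) :=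
            ENNReal.ofReal_mul hKnn
  calc ∫⁻ x : ℝ × ℝ, ENNReal.ofReal (g x)
      ≤ ∫⁻ x : ℝ × ℝ, ((Metric.closedBall (0 : ℝ × ℝ) 1).indicator (fun _ => 1) x
        + ENNReal.ofReal K * ENNReal.ofReal ((1 + ‖x‖) ^ (-α))) := lintegral_mono hpt
    _ = (∫⁻ x : ℝ × ℝ, (Metric.closedBall (0 : ℝ × ℝ) 1).indicator (fun _ => 1) x)
        + ∫⁻ x : ℝ × ℝ, ENNReal.ofReal K * ENNReal.ofReal ((1 + ‖x‖) ^ (-α)) := by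
        rw [lintegral_add_left]
        exact Measurable.indicator measurable_const measurableSet_closedBall
    _ < ⊤ := by
        rw [lintegral_indicator measurableSet_closedBall,
          lintegral_const_mul _ (by fun_prop)]
        refine ENNReal.add_lt_top.2 ⟨?_, ENNReal.mul_lt_top ENNReal.ofReal_lt_top ?_⟩
        · rw [setLIntegral_one]
          exact measure_closedBall_lt_top
        · refine finite_integral_one_add_norm ?_
          have : Module.finrank ℝ (ℝ × ℝ) = 2 := by
            simp [Module.finrank_prod]
          rw [this]
          norm_num
          linarith

/-- If `α ≥ 4` and `g : ℝ² → [0,1]` is measurable with `g(x) ≤ M |x|^{-α}` for `x ≠ 0`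
(1-norm), then for any bounded box `B = [a₁,b₁] × [a₂,b₂]` we have
`∫_B ∫_{ℝ²∖B} g(x - y) dx dy < ∞`. -/
theorem finite_box_integral
    (α : ℝ) (hα : 4 ≤ α)
    (g : ℝ × ℝ → ℝ) (hgm : Measurable g)
    (hg0 : ∀ x, 0 ≤ g x) (hg1 : ∀ x, g x ≤ 1)
    (hbound : ∃ M : ℝ, ∀ x : ℝ × ℝ, x ≠ 0 → g x ≤ M * (|x.1| + |x.2|) ^ (-α))
    (a₁ b₁ a₂ b₂ : ℝ) (h₁ : a₁ < b₁) (h₂ : a₂ < b₂) :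
    ∫⁻ y in (Icc a₁ b₁ ×ˢ Icc a₂ b₂),
      ∫⁻ x in (Icc a₁ b₁ ×ˢ Icc a₂ b₂)ᶜ, ENNReal.ofReal (g (x - y)) < ⊤ := by
  set C := ∫⁻ x : ℝ × ℝ, ENNReal.ofReal (g x) with hC
  have hCfin : C < ⊤ := my_finite_total α hα g hgm hg0 hg1 hbound
  have hinner : ∀ y : ℝ × ℝ,
      ∫⁻ x in (Icc a₁ b₁ ×ˢ Icc a₂ b₂)ᶜ, ENNReal.ofReal (g (x - y)) ≤ C := by
    intro y
    calc ∫⁻ x in (Icc a₁ b₁ ×ˢ Icc a₂ b₂)ᶜ, ENNReal.ofReal (g (x - y))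
        ≤ ∫⁻ x : ℝ × ℝ, ENNReal.ofReal (g (x - y)) :=
          setLIntegral_le_lintegral _ _
      _ = C := lintegral_sub_right_eq_self (fun x => ENNReal.ofReal (g x)) y
  calc ∫⁻ y in (Icc a₁ b₁ ×ˢ Icc a₂ b₂),
        ∫⁻ x in (Icc a₁ b₁ ×ˢ Icc a₂ b₂)ᶜ, ENNReal.ofReal (g (x - y))
      ≤ ∫⁻ _ in (Icc a₁ b₁ ×ˢ Icc a₂ b₂), C :=
        lintegral_mono fun y => hinner y
    _ = C * volume (Icc a₁ b₁ ×ˢ Icc a₂ b₂) := by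
        rw [setLIntegral_const]
    _ < ⊤ := by
        exact ENNReal.mul_lt_top hCfin
          (isCompact_Icc.prod isCompact_Icc).measure_lt_top
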